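/- Let E be a directed graph and let g be a graph trace on E. If a vertex v ∈ E^0 is the base of two distinct simple closed paths, then g(v) = 0. -/

import Mathlib

/-- A directed graph `E = (E⁰, E¹, r, s)`: `V` is the vertex set `E⁰`, `Edg` is the
edge set `E¹`, and `s`, `r` give the source and range of each edge. -/
structure DGraph (V : Type*) (Edg : Type*) where
  s : Edg → V
  r : Edg → V

namespace DGraph

variable {V Edg : Type*}

/-- There is an edge from `v` to `w`. -/
def Adj (G : DGraph V Edg) (v w : V) : Prop := ∃ e, G.s e = v ∧ G.r e = w

/-- There is a path (possibly of length zero, i.e. a vertex) from `v` to `w`. -/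
def Reaches (G : DGraph V Edg) : V → V → Prop := Relation.ReflTransGen G.Adj

/-- A subset `X ⊆ E⁰` is hereditary if `r(e) ∈ X` whenever `s(e) ∈ X`. -/
def Hereditary (G : DGraph V Edg) (X : Set V) : Prop := ∀ e, G.s e ∈ X → G.r e ∈ X

/-- A vertex is a finite emitter if `s⁻¹(v)` is finite and nonempty. -/
def FiniteEmitter (G : DGraph V Edg) (v : V) : Prop :=
  {e | G.s e = v}.Finite ∧ {e | G.s e = v}.Nonempty

/-- A subset `X ⊆ E⁰` is saturated if every finite emitter `v` with
`r(s⁻¹(v)) ⊆ X` lies in `X`. -/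
def Saturated (G : DGraph V Edg) (X : Set V) : Prop :=
  ∀ v, FiniteEmitter G v → (∀ e, G.s e = v → G.r e ∈ X) → v ∈ X

/-- The hereditary saturated closure of `X`: the smallest hereditary and saturated
subset of `E⁰` containing `X`. -/
def satClosure (G : DGraph V Edg) (X : Set V) : Set V :=
  ⋂₀ {Y | Hereditary G Y ∧ Saturated G Y ∧ X ⊆ Y}

/-- The consecutive edges of a path match up: `r(eᵢ) = s(eᵢ₊₁)`. -/
def IsChain (G : DGraph V Edg) (p : List Edg) : Prop :=
  List.Chain' (fun e f => G.r e = G.s f) p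

/-- `p` is a closed path (of length ≥ 1) based at `v`. -/
def IsClosedPathAt (G : DGraph V Edg) (p : List Edg) (v : V) : Prop :=
  ∃ hne : p ≠ [], IsChain G p ∧ G.s (p.head hne) = v ∧ G.r (p.getLast hne) = v

/-- `p` is a closed path (of length ≥ 1). -/
def IsClosedPath (G : DGraph V Edg) (p : List Edg) : Prop := ∃ v, IsClosedPathAt G p v

/-- The vertex set `α⁰ = {s(e₁), …, s(eₙ)}` of a path. -/
def pathVerts (G : DGraph V Edg) (p : List Edg) : Set V := {w | ∃ e ∈ p, G.s e = w}

/-- An exit of a closed path `e₁⋯eₙ` is an edge `f` with `s(f) = s(eᵢ)` and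
`f ≠ eᵢ` for some `i`. -/
def IsExitOf (G : DGraph V Edg) (f : Edg) (p : List Edg) : Prop :=
  ∃ e ∈ p, G.s f = G.s e ∧ f ≠ e

/-- `p` is a simple closed path based at `v`: a closed path whose sources are
pairwise distinct. -/
def IsSimpleClosedPathAt (G : DGraph V Edg) (p : List Edg) (v : V) : Prop :=
  IsClosedPathAt G p v ∧ (p.map G.s).Nodup

end DGraph

/-- A graph trace on `E`: a function `g : E⁰ → [0,∞)` such that
(1) `g(v) ≥ Σᵢ g(r(eᵢ))` for every vertex `v` and every finite set of distinct edges
emitted by `v`, and (2) `g(v) = Σ_{s(e)=v} g(r(e))` for every finite emitter `v`. -/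
structure GraphTrace {V Edg : Type*} (G : DGraph V Edg) where
  g : V → ℝ
  nonneg : ∀ v, 0 ≤ g v
  sum_le : ∀ (v : V) (F : Finset Edg), (∀ e ∈ F, G.s e = v) →
    ∑ e ∈ F, g (G.r e) ≤ g v
  emitter_eq : ∀ (v : V) (h : {e | G.s e = v}.Finite), {e | G.s e = v}.Nonempty →
    g v = ∑ e ∈ h.toFinset, g (G.r e)

section Aux

variable {V Edg : Type*} (G : DGraph V Edg) (T : GraphTrace G)

lemma aux_edge_mono (e : Edg) : T.g (G.r e) ≤ T.g (G.s e) := by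
  have h := T.sum_le (G.s e) {e} (by simp)
  simpa using h

lemma aux_chain_last_le : ∀ (p : List Edg) (hne : p ≠ []), G.IsChain p →
    ∀ e ∈ p, T.g (G.r (p.getLast hne)) ≤ T.g (G.r e)
  | [], hne, _, _, _ => absurd rfl hne
  | [a], _, _, e, he => by
      simp only [List.mem_singleton] at he; subst he; simp
  | a :: b :: l, _, hc, e, he => by
      obtain ⟨hab, hc'⟩ := List.isChain_cons_cons.mp hc
      have hlast : (a :: b :: l).getLast (by simp) = (b :: l).getLast (by simp) :=
        List.getLast_cons (by simp)
      rw [hlast]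
      rcases List.mem_cons.mp he with rfl | he'
      · have h1 := aux_chain_last_le (b :: l) (by simp) hc' b (by simp)
        have h2 := aux_edge_mono G T b
        rw [← hab] at h2
        linarith
      · exact aux_chain_last_le (b :: l) (by simp) hc' e he'

lemma aux_chain_head_le : ∀ (p : List Edg) (hne : p ≠ []), G.IsChain p →
    ∀ e ∈ p, T.g (G.s e) ≤ T.g (G.s (p.head hne))
  | [], hne, _, _, _ => absurd rfl hne
  | [a], _, _, e, he => by
      simp only [List.mem_singleton] at he; subst he; simp
  | a :: b :: l, _, hc, e, he => by
      obtain ⟨hab, hc'⟩ := List.isChain_cons_cons.mp hc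
      rcases List.mem_cons.mp he with rfl | he'
      · simp
      · have h1 := aux_chain_head_le (b :: l) (by simp) hc' e he'
        have h2 := aux_edge_mono G T a
        simp only [List.head_cons] at h1 ⊢
        rw [← hab] at h1
        linarith

/-- On a closed path based at `v`, every range-vertex has trace value `g v`. -/
lemma aux_closed_eq {p : List Edg} {v : V} (h : G.IsClosedPathAt p v) :
    ∀ e ∈ p, T.g (G.r e) = T.g v := by
  obtain ⟨hne, hchain, hhead, hlast⟩ := h
  intro e he
  have h1 := aux_chain_last_le G T p hne hchain e he
  have h2 := aux_chain_head_le G T p hne hchain e he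
  have h3 := aux_edge_mono G T e
  rw [hlast] at h1
  rw [hhead] at h2
  linarith

lemma aux_diverge (v : V) : ∀ (p q : List Edg) (hp : p ≠ []) (hq : q ≠ []),
    G.IsChain p → G.IsChain q →
    G.s (p.head hp) = G.s (q.head hq) →
    G.r (p.getLast hp) = v → G.r (q.getLast hq) = v →
    (∀ f ∈ p.tail, G.s f ≠ v) → (∀ f ∈ q.tail, G.s f ≠ v) →
    p ≠ q → ∃ e ∈ p, ∃ f ∈ q, G.s e = G.s f ∧ e ≠ f
  | [], _, hp, _, _, _, _, _, _, _, _, _ => absurd rfl hp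
  | a :: p', [], _, hq, _, _, _, _, _, _, _, _ => absurd rfl hq
  | a :: p', b :: q', _, _, hcp, hcq, hhead, hlp, hlq, htp, htq, hne => by
      simp only [List.head_cons] at hhead
      by_cases hab : a = b
      · subst hab
        rcases p' with _ | ⟨c, p''⟩ <;> rcases q' with _ | ⟨d, q''⟩
        · exact absurd rfl hne
        · exfalso
          simp only [List.getLast_singleton] at hlp
          have hsc : G.r a = G.s d := (List.isChain_cons_cons.mp hcq).1
          exact htq d (by simp) (by rw [← hsc, hlp])
        · exfalso
          simp only [List.getLast_singleton] at hlq
          have hsc : G.r a = G.s c := (List.isChain_cons_cons.mp hcp).1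
          exact htp c (by simp) (by rw [← hsc, hlq])
        · have hcp' := (List.isChain_cons_cons.mp hcp).2
          have hcq' := (List.isChain_cons_cons.mp hcq).2
          have hhead' : G.s ((c :: p'').head (by simp)) = G.s ((d :: q'').head (by simp)) := by
            have h1 : G.r a = G.s c := (List.isChain_cons_cons.mp hcp).1
            have h2 : G.r a = G.s d := (List.isChain_cons_cons.mp hcq).1
            simp only [List.head_cons]
            rw [← h1, ← h2]
          have hlp' : G.r ((c :: p'').getLast (by simp)) = v := by
            rw [← hlp]; exact congrArg G.r (List.getLast_cons (by simp)).symm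
          have hlq' : G.r ((d :: q'').getLast (by simp)) = v := by
            rw [← hlq]; exact congrArg G.r (List.getLast_cons (by simp)).symm
          have htp' : ∀ f ∈ (c :: p'').tail, G.s f ≠ v := fun f hf =>
            htp f (List.mem_cons_of_mem c hf)
          have htq' : ∀ f ∈ (d :: q'').tail, G.s f ≠ v := fun f hf =>
            htq f (List.mem_cons_of_mem d hf)
          have hne' : (c :: p'') ≠ (d :: q'') := fun h => hne (by rw [h])
          obtain ⟨e, he, f, hf, hsef, hef⟩ :=
            aux_diverge v (c :: p'') (d :: q'') (by simp) (by simp)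
              hcp' hcq' hhead' hlp' hlq' htp' htq' hne'
          exact ⟨e, List.mem_cons_of_mem a he, f, List.mem_cons_of_mem a hf, hsef, hef⟩
      · exact ⟨a, List.mem_cons_self, b, List.mem_cons_self, hhead, hab⟩

end Aux

/-- if a vertex `v` is the base of two distinct simple closed
paths, then `g(v) = 0` for every graph trace `g`. -/
theorem stmt11 {V Edg : Type*} (G : DGraph V Edg) (T : GraphTrace G) (v : V)
    (p q : List Edg) (hp : G.IsSimpleClosedPathAt p v) (hq : G.IsSimpleClosedPathAt q v)
    (hpq : p ≠ q) : T.g v = 0 := by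
  obtain ⟨hpc, hpn⟩ := hp
  obtain ⟨hqc, hqn⟩ := hq
  obtain ⟨hpne, hpchain, hphead, hplast⟩ := hpc
  obtain ⟨hqne, hqchain, hqhead, hqlast⟩ := hqc
  -- tail source condition
  have htail : ∀ (l : List Edg) (hl : l ≠ []), (l.map G.s).Nodup → G.s (l.head hl) = v →
      ∀ f ∈ l.tail, G.s f ≠ v := by
    intro l hl hnd hh f hf hfv
    match l, hl with
    | a :: l', _ =>
      simp only [List.head_cons] at hh
      simp only [List.tail_cons] at hf
      simp only [List.map_cons, List.nodup_cons] at hnd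
      exact hnd.1 (hh ▸ hfv ▸ List.mem_map_of_mem (f := G.s) hf)
  obtain ⟨e, he, f, hf, hsef, hef⟩ :=
    aux_diverge G v p q hpne hqne hpchain hqchain (by rw [hphead, hqhead])
      hplast hqlast (htail p hpne hpn hphead) (htail q hqne hqn hqhead) hpq
  have hre : T.g (G.r e) = T.g v := aux_closed_eq G T ⟨hpne, hpchain, hphead, hplast⟩ e he
  have hrf : T.g (G.r f) = T.g v := aux_closed_eq G T ⟨hqne, hqchain, hqhead, hqlast⟩ f hf
  haveI := Classical.decEq Edg
  have hsum := T.sum_le (G.s e) {e, f} (by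
    intro x hx
    rcases Finset.mem_insert.mp hx with rfl | hx
    · rfl
    · rw [Finset.mem_singleton] at hx; subst hx; exact hsef.symm)
  rw [Finset.sum_pair hef] at hsum
  have hsev : T.g (G.s e) ≤ T.g v := by
    have := aux_chain_head_le G T p hpne hpchain e he
    rwa [hphead] at this
  have hnn := T.nonneg v
  linarith
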